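/- Let G be a connected graph with n ≥ 2 vertices and m edges. Then the Kirchhoff indices of the triangulation and subdivision of G are related by R(T(G)) = (1/3)·R(S(G)) + m(m + n − 1)/3. -/

import Mathlib

open BigOperators Matrix

namespace KirchhoffPaper

/-- `B` is a Moore–Penrose (pseudo)inverse of `A`. -/
def IsMoorePenrose {n : Type*} [Fintype n] [DecidableEq n] (A B : Matrix n n ℝ) : Prop :=
  A * B * A = A ∧ B * A * B = B ∧ (A * B)ᵀ = A * B ∧ (B * A)ᵀ = B * A

variable {V : Type*}

/-- The resistance distance between `i` and `j` in `G`: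
`Ω_{ij} = L⁺_{ii} + L⁺_{jj} - 2 L⁺_{ij}` with `L⁺` the Moore–Penrose inverse of the Laplacian. -/
noncomputable def resistanceDistance [Fintype V] [DecidableEq V]
    (G : SimpleGraph V) [DecidableRel G.Adj] (i j : V) : ℝ :=
  letI := Classical.propDecidable
  if h : ∃ B, IsMoorePenrose (G.lapMatrix ℝ) B then
    h.choose i i + h.choose j j - 2 * h.choose i j
  else 0

/-- Kirchhoff index `R(G) = Σ_{{i,j}⊆V} Ω_{ij}` (as half the sum over ordered pairs;
note `Ω_{ii} = 0`). -/
noncomputable def kirchhoffIndex [Fintype V] [DecidableEq V]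
    (G : SimpleGraph V) [DecidableRel G.Adj] : ℝ :=
  (1 / 2) * ∑ i, ∑ j, resistanceDistance G i j

/-- Additive degree-Kirchhoff index `R⁺(G) = Σ_{{i,j}⊆V} (d_i + d_j) Ω_{ij}`. -/
noncomputable def addDegKirchhoffIndex [Fintype V] [DecidableEq V]
    (G : SimpleGraph V) [DecidableRel G.Adj] : ℝ :=
  (1 / 2) * ∑ i, ∑ j, ((G.degree i : ℝ) + (G.degree j : ℝ)) * resistanceDistance G i j

/-- Multiplicative degree-Kirchhoff index `R*(G) = Σ_{{i,j}⊆V} d_i d_j Ω_{ij}`. -/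
noncomputable def mulDegKirchhoffIndex [Fintype V] [DecidableEq V]
    (G : SimpleGraph V) [DecidableRel G.Adj] : ℝ :=
  (1 / 2) * ∑ i, ∑ j, ((G.degree i : ℝ) * (G.degree j : ℝ)) * resistanceDistance G i j

/-- The subdivision `S(G)`: each edge of `G` is replaced by a path of length two through a
new vertex (one new vertex per edge of `G`). -/
def subdivision [DecidableEq V] (G : SimpleGraph V) : SimpleGraph (V ⊕ G.edgeSet) where
  Adj x y :=
    match x, y with
    | Sum.inl u, Sum.inr e => u ∈ (e : Sym2 V)
    | Sum.inr e, Sum.inl u => u ∈ (e : Sym2 V)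
    | _, _ => False
  symm := ⟨by rintro (u | e) (v | f) h <;> exact h⟩
  loopless := ⟨by rintro (u | e) h <;> exact h⟩

/-- The triangulation `T(G)`: each edge `uv` of `G` is turned into a triangle `uwv`
with `w` a new vertex associated with `uv`. -/
def triangulation [DecidableEq V] (G : SimpleGraph V) : SimpleGraph (V ⊕ G.edgeSet) where
  Adj x y :=
    match x, y with
    | Sum.inl u, Sum.inl v => G.Adj u v
    | Sum.inl u, Sum.inr e => u ∈ (e : Sym2 V)
    | Sum.inr e, Sum.inl u => u ∈ (e : Sym2 V)
    | _, _ => False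
  symm := by
    constructor
    rintro (u | e) (v | f) h
    · exact G.adj_symm h
    · exact h
    · exact h
    · exact h
  loopless := by
    constructor
    rintro (u | e) h
    · exact G.loopless.irrefl u h
    · exact h

instance [Fintype V] [DecidableEq V] (G : SimpleGraph V) [DecidableRel G.Adj] :
    DecidableRel (subdivision G).Adj := fun x y =>
  match x, y with
  | Sum.inl _, Sum.inl _ => inferInstanceAs (Decidable False)
  | Sum.inl u, Sum.inr e => inferInstanceAs (Decidable (u ∈ (e : Sym2 V)))
  | Sum.inr e, Sum.inl u => inferInstanceAs (Decidable (u ∈ (e : Sym2 V)))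
  | Sum.inr _, Sum.inr _ => inferInstanceAs (Decidable False)

instance [Fintype V] [DecidableEq V] (G : SimpleGraph V) [DecidableRel G.Adj] :
    DecidableRel (triangulation G).Adj := fun x y =>
  match x, y with
  | Sum.inl u, Sum.inl v => inferInstanceAs (Decidable (G.Adj u v))
  | Sum.inl u, Sum.inr e => inferInstanceAs (Decidable (u ∈ (e : Sym2 V)))
  | Sum.inr e, Sum.inl u => inferInstanceAs (Decidable (u ∈ (e : Sym2 V)))
  | Sum.inr _, Sum.inr _ => inferInstanceAs (Decidable False)

/-- A bundled finite simple graph (with decidable adjacency), used for iterating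
the subdivision and triangulation constructions. -/
structure FGraph where
  V : Type*
  [fV : Fintype V]
  [dV : DecidableEq V]
  G : SimpleGraph V
  [dG : DecidableRel G.Adj]

attribute [instance] FGraph.fV FGraph.dV FGraph.dG

/-- Subdivision, as an operation on bundled graphs. -/
def FGraph.subdiv (H : FGraph) : FGraph := { V := H.V ⊕ H.G.edgeSet, G := subdivision H.G }

/-- Triangulation, as an operation on bundled graphs. -/
def FGraph.triang (H : FGraph) : FGraph := { V := H.V ⊕ H.G.edgeSet, G := triangulation H.G }

/-- Kirchhoff index of a bundled graph. -/
noncomputable def FGraph.R (H : FGraph) : ℝ := kirchhoffIndex H.G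

/-- Additive degree-Kirchhoff index of a bundled graph. -/
noncomputable def FGraph.Rplus (H : FGraph) : ℝ := addDegKirchhoffIndex H.G

/-- Multiplicative degree-Kirchhoff index of a bundled graph. -/
noncomputable def FGraph.Rstar (H : FGraph) : ℝ := mulDegKirchhoffIndex H.G


section AuxGeneral

lemma lap_mulVec {W : Type*} [Fintype W] [DecidableEq W] (H : SimpleGraph W)
    [DecidableRel H.Adj] (z : W → ℝ) (i : W) :
    (H.lapMatrix ℝ *ᵥ z) i = ∑ j, if H.Adj i j then z i - z j else 0 := by
  rw [SimpleGraph.lapMatrix_mulVec_apply, SimpleGraph.degree_eq_sum_if_adj,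
    SimpleGraph.neighborFinset_eq_filter, Finset.sum_filter, Finset.sum_mul]
  rw [← Finset.sum_sub_distrib]
  congr 1; ext j
  split <;> ring

lemma lap_row_sum {W : Type*} [Fintype W] [DecidableEq W] (H : SimpleGraph W)
    [DecidableRel H.Adj] (i : W) : ∑ j, H.lapMatrix ℝ i j = 0 := by
  have := congrFun (H.lapMatrix_mulVec_const_eq_zero (R := ℝ)) i
  simpa [Matrix.mulVec, dotProduct] using this

lemma exists_MP {W : Type*} [Fintype W] [DecidableEq W] (H : SimpleGraph W)
    [DecidableRel H.Adj] (hconn : H.Connected) :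
    ∃ B : Matrix W W ℝ, IsMoorePenrose (H.lapMatrix ℝ) B ∧
      ∀ r : W → ℝ, ∑ i, r i = 0 → H.lapMatrix ℝ *ᵥ (B *ᵥ r) = r := by
  classical
  haveI : Nonempty W := hconn.nonempty
  set L : Matrix W W ℝ := H.lapMatrix ℝ with hL
  set c : ℝ := (Fintype.card W : ℝ)⁻¹ with hc
  have hcard : (0:ℝ) < (Fintype.card W : ℝ) := by exact_mod_cast Fintype.card_pos
  set J : Matrix W W ℝ := Matrix.of (fun _ _ => 1) with hJ
  have hJsymm : Jᵀ = J := by ext i j; simp [hJ]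
  have hLsymm : Lᵀ = L := H.isSymm_lapMatrix (R := ℝ)
  have hJJ : J * J = (Fintype.card W : ℝ) • J := by
    ext i j; simp [hJ, Matrix.mul_apply, Matrix.smul_apply]
  have hLJ : L * J = 0 := by
    ext i j; simp [Matrix.mul_apply, hJ, hL, lap_row_sum H i]
  have hJL : J * L = 0 := by
    have := congrArg Matrix.transpose hLJ
    rwa [Matrix.transpose_mul, hJsymm, hLsymm, Matrix.transpose_zero] at this
  set K : Matrix W W ℝ := L + c • J with hKdef
  have hKsymm : Kᵀ = K := by
    rw [hKdef, Matrix.transpose_add, Matrix.transpose_smul, hJsymm, hLsymm]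
  have hK1 : K *ᵥ (fun _ => 1) = fun _ => 1 := by
    ext i
    simp only [hKdef, Matrix.add_mulVec, Matrix.smul_mulVec,
      H.lapMatrix_mulVec_const_eq_zero, ← hL]
    simp [hJ, Matrix.mulVec, dotProduct, hc, mul_comm, hcard.ne', hL, lap_row_sum H i]
  have hKinj : Function.Injective K.mulVec := by
    have key : ∀ z : W → ℝ, K *ᵥ z = 0 → z = 0 := by
      intro z hz
      have hsum : ∑ i, z i = 0 := by
        have h1 : (fun _ => (1:ℝ)) ⬝ᵥ (K *ᵥ z) = 0 := by rw [hz]; simp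
        rw [Matrix.dotProduct_mulVec, ← Matrix.mulVec_transpose, hKsymm, hK1] at h1
        simpa [dotProduct] using h1
      have hJz : J *ᵥ z = 0 := by
        ext i; simp [hJ, Matrix.mulVec, dotProduct, hsum]
      have hLz : L *ᵥ z = 0 := by
        have h2 : L *ᵥ z + c • (J *ᵥ z) = 0 := by
          rw [← Matrix.smul_mulVec, ← Matrix.add_mulVec, ← hKdef, hz]
        simpa [hJz] using h2
      have hconst : ∀ i j, z i = z j := by
        intro i j
        have h3 := (H.lapMatrix_mulVec_eq_zero_iff_forall_reachable).mp
          hLz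
        exact h3 i j (hconn.preconnected i j)
      ext i
      have h4 : (Fintype.card W : ℝ) * z i = 0 := by
        rw [← hsum]
        rw [Finset.sum_congr rfl fun j _ => (hconst j i)]
        simp [mul_comm]
      have h5 := mul_eq_zero.mp h4
      simpa [hcard.ne'] using h5.resolve_left hcard.ne'
    intro x y hxy
    have h6 : K *ᵥ (x - y) = 0 := by rw [Matrix.mulVec_sub, hxy, sub_self]
    exact sub_eq_zero.mp (key _ h6)
  have hKunit : IsUnit K := Matrix.mulVec_injective_iff_isUnit.mp hKinj
  have hKK : K * K⁻¹ = 1 := Matrix.mul_nonsing_inv _ (Matrix.isUnit_iff_isUnit_det _ |>.mp hKunit)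
  have hKK' : K⁻¹ * K = 1 := Matrix.nonsing_inv_mul _ (Matrix.isUnit_iff_isUnit_det _ |>.mp hKunit)
  have hKJ : K * J = J := by
    rw [hKdef, Matrix.add_mul, hLJ, Matrix.smul_mul, hJJ, zero_add, smul_smul, hc,
      inv_mul_cancel₀ hcard.ne', one_smul]
  have hJK : J * K = J := by
    have := congrArg Matrix.transpose hKJ
    rwa [Matrix.transpose_mul, hJsymm, hKsymm] at this
  have hKiJ : K⁻¹ * J = J := by
    calc K⁻¹ * J = K⁻¹ * (K * J) := by rw [hKJ]
    _ = (K⁻¹ * K) * J := by rw [Matrix.mul_assoc]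
    _ = J := by rw [hKK', Matrix.one_mul]
  have hJKi : J * K⁻¹ = J := by
    calc J * K⁻¹ = (J * K) * K⁻¹ := by rw [hJK]
    _ = J * (K * K⁻¹) := by rw [Matrix.mul_assoc]
    _ = J := by rw [hKK, Matrix.mul_one]
  set B : Matrix W W ℝ := K⁻¹ - c • J with hB
  have hLeq : L = K - c • J := by rw [hKdef]; abel
  have hcJJ : (c • J) * (c • J) = c • J := by
    rw [Matrix.smul_mul, Matrix.mul_smul, hJJ, smul_smul, smul_smul, hc]
    congr 1
    field_simp
  have hLB : L * B = 1 - c • J := by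
    rw [hLeq, hB, Matrix.sub_mul, Matrix.mul_sub, Matrix.mul_sub, hKK, Matrix.mul_smul, hKJ,
      Matrix.smul_mul, hJKi, hcJJ]
    abel
  have hBL : B * L = 1 - c • J := by
    rw [hLeq, hB, Matrix.mul_sub, Matrix.sub_mul, Matrix.sub_mul, hKK', Matrix.mul_smul,
      Matrix.smul_mul, hJK, hcJJ]
    rw [hKiJ]
    abel
  refine ⟨B, ⟨?_, ?_, ?_, ?_⟩, ?_⟩
  · rw [hLB, Matrix.sub_mul, Matrix.one_mul, Matrix.smul_mul, hJL, smul_zero, sub_zero]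
  · rw [hBL, hB, Matrix.mul_sub, Matrix.sub_mul, Matrix.sub_mul, Matrix.one_mul, Matrix.one_mul,
      Matrix.smul_mul, hJKi, hcJJ]
    abel
  · rw [hLB, Matrix.transpose_sub, Matrix.transpose_one, Matrix.transpose_smul, hJsymm]
  · rw [hBL, Matrix.transpose_sub, Matrix.transpose_one, Matrix.transpose_smul, hJsymm]
  · intro r hr
    rw [Matrix.mulVec_mulVec, hLB, Matrix.sub_mulVec, Matrix.one_mulVec,
      Matrix.smul_mulVec]
    have h7 : J *ᵥ r = 0 := by ext i; simp [hJ, Matrix.mulVec, dotProduct, hr]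
    rw [h7, smul_zero, sub_zero]

lemma MP_unique {W : Type*} [Fintype W] [DecidableEq W] {A B C : Matrix W W ℝ}
    (hB : IsMoorePenrose A B) (hC : IsMoorePenrose A C) : B = C := by
  obtain ⟨hB1, hB2, hB3, hB4⟩ := hB
  obtain ⟨hC1, hC2, hC3, hC4⟩ := hC
  have hAB : A * B = A * C := by
    calc A * B = (A * C * A) * B := by rw [hC1]
      _ = (A * C) * (A * B) := by rw [Matrix.mul_assoc]
      _ = (A * C)ᵀ * (A * B)ᵀ := by rw [hC3, hB3]
      _ = Cᵀ * (A * B * A)ᵀ := by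
          simp only [Matrix.transpose_mul, Matrix.transpose_transpose, Matrix.mul_assoc]
      _ = Cᵀ * Aᵀ := by rw [hB1]
      _ = (A * C)ᵀ := by rw [Matrix.transpose_mul]
      _ = A * C := hC3
  have hBA : B * A = C * A := by
    calc B * A = B * (A * C * A) := by rw [hC1]
      _ = (B * A) * (C * A) := by
          simp only [Matrix.mul_assoc]
      _ = (B * A)ᵀ * (C * A)ᵀ := by rw [hB4, hC4]
      _ = ((C * (A * B * A)))ᵀ := by
          simp only [Matrix.transpose_mul, Matrix.transpose_transpose, Matrix.mul_assoc]
      _ = (C * A)ᵀ := by rw [hB1]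
      _ = C * A := hC4
  calc B = B * A * B := hB2.symm
    _ = C * A * B := by rw [hBA]
    _ = C * (A * B) := by rw [Matrix.mul_assoc]
    _ = C * (A * C) := by rw [hAB]
    _ = C * A * C := by rw [Matrix.mul_assoc]
    _ = C := hC2

lemma MP_transpose {W : Type*} [Fintype W] [DecidableEq W] {A B : Matrix W W ℝ}
    (hA : Aᵀ = A) (hB : IsMoorePenrose A B) : IsMoorePenrose A Bᵀ := by
  obtain ⟨h1, h2, h3, h4⟩ := hB
  refine ⟨?_, ?_, ?_, ?_⟩
  · calc A * Bᵀ * A = (A * B * A)ᵀ := by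
          simp only [Matrix.transpose_mul, Matrix.transpose_transpose, Matrix.mul_assoc, hA]
      _ = Aᵀ := by rw [h1]
      _ = A := hA
  · calc Bᵀ * A * Bᵀ = (B * A * B)ᵀ := by
          simp only [Matrix.transpose_mul, Matrix.transpose_transpose, Matrix.mul_assoc, hA]
      _ = Bᵀ := by rw [h2]
  · calc (A * Bᵀ)ᵀ = B * Aᵀ := by rw [Matrix.transpose_mul, Matrix.transpose_transpose]
      _ = B * A := by rw [hA]
      _ = (B * A)ᵀ := h4.symm
      _ = Aᵀ * Bᵀ := by rw [Matrix.transpose_mul]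
      _ = A * Bᵀ := by rw [hA]
  · calc (Bᵀ * A)ᵀ = Aᵀ * B := by rw [Matrix.transpose_mul, Matrix.transpose_transpose]
      _ = A * B := by rw [hA]
      _ = (A * B)ᵀ := h3.symm
      _ = Bᵀ * Aᵀ := by rw [Matrix.transpose_mul]
      _ = Bᵀ * A := by rw [hA]

lemma MP_symm {W : Type*} [Fintype W] [DecidableEq W] {A B : Matrix W W ℝ}
    (hA : Aᵀ = A) (hB : IsMoorePenrose A B) : Bᵀ = B :=
  MP_unique (MP_transpose hA hB) hB

lemma resist_self {W : Type*} [Fintype W] [DecidableEq W] (H : SimpleGraph W)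
    [DecidableRel H.Adj] (x : W) : resistanceDistance H x x = 0 := by
  unfold resistanceDistance
  split <;> ring

lemma resist_eq_of_MP {W : Type*} [Fintype W] [DecidableEq W] (H : SimpleGraph W)
    [DecidableRel H.Adj] (x y : W) (B : Matrix W W ℝ)
    (hB : IsMoorePenrose (H.lapMatrix ℝ) B) :
    resistanceDistance H x y = B x x + B y y - 2 * B x y := by
  have hLL : @SimpleGraph.lapMatrix W ℝ _ H (fun a b => Classical.propDecidable _)
      (fun a b => Classical.propDecidable _) (@Ring.toAddGroupWithOne ℝ Real.instRing)
      = H.lapMatrix ℝ := by congr!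
  have hB' : @IsMoorePenrose W _ (fun a b => Classical.propDecidable (a = b))
      (@SimpleGraph.lapMatrix W ℝ _ H (fun a b => Classical.propDecidable _)
        (fun a b => Classical.propDecidable _) (@Ring.toAddGroupWithOne ℝ Real.instRing)) B := by
    rw [hLL]; exact hB
  have h' : ∃ C, @IsMoorePenrose W _ (fun a b => Classical.propDecidable (a = b))
      (@SimpleGraph.lapMatrix W ℝ _ H (fun a b => Classical.propDecidable _)
        (fun a b => Classical.propDecidable _) (@Ring.toAddGroupWithOne ℝ Real.instRing)) C :=
    ⟨B, hB'⟩
  unfold resistanceDistance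
  rw [dif_pos h']
  have hu : h'.choose = B :=
    @MP_unique W _ (fun a b => Classical.propDecidable (a = b)) _ _ _ h'.choose_spec hB'
  rw [hu]

lemma resist_eq {W : Type*} [Fintype W] [DecidableEq W] (H : SimpleGraph W)
    [DecidableRel H.Adj] (hconn : H.Connected) (x y : W) (z : W → ℝ)
    (hz : H.lapMatrix ℝ *ᵥ z = Pi.single x 1 - Pi.single y 1) :
    resistanceDistance H x y = z x - z y := by
  classical
  obtain ⟨B, hMP, _⟩ := exists_MP H hconn
  rw [resist_eq_of_MP H x y B hMP]
  set L : Matrix W W ℝ := H.lapMatrix ℝ with hL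
  have hLsymm : Lᵀ = L := H.isSymm_lapMatrix (R := ℝ)
  have hBsymm : Bᵀ = B := MP_symm hLsymm hMP
  set r : W → ℝ := Pi.single x 1 - Pi.single y 1 with hr
  have h1 : r ⬝ᵥ (B *ᵥ r) = B x x + B y y - 2 * B x y := by
    have hxy : B x y = B y x := by
      conv_lhs => rw [← hBsymm]
      exact Matrix.transpose_apply B x y
    rw [hr]
    rw [sub_dotProduct, Matrix.mulVec_sub]
    simp only [dotProduct_sub, single_dotProduct, one_mul, Pi.sub_apply]
    rw [Matrix.mulVec_single, Matrix.mulVec_single]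
    simp only [Pi.smul_apply, Matrix.col_apply, op_smul_eq_mul, mul_one]
    rw [hxy]; ring
  have hstep : r ᵥ* (B * L) = r := by
    have h2 : (B * L)ᵀ = L * B := by rw [Matrix.transpose_mul, hLsymm, hBsymm]
    rw [← Matrix.mulVec_transpose, h2, ← hz, Matrix.mulVec_mulVec, hMP.1]
  have h2 : r ⬝ᵥ (B *ᵥ r) = r ⬝ᵥ z := by
    conv_lhs => rw [← hz, Matrix.mulVec_mulVec, hz]
    rw [Matrix.dotProduct_mulVec, hstep]
  have h3 : r ⬝ᵥ z = z x - z y := by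
    rw [hr, sub_dotProduct, single_dotProduct, single_dotProduct,
      one_mul, one_mul]
  rw [← h1, h2, h3]

end AuxGeneral

section AuxGraph

variable {V₀ : Type*} [Fintype V₀] [DecidableEq V₀] (G₀ : SimpleGraph V₀) [DecidableRel G₀.Adj]

lemma count_two (e : G₀.edgeSet) :
    ∑ v : V₀, (if v ∈ (e : Sym2 V₀) then (1:ℝ) else 0) = 2 := by
  obtain ⟨e, he⟩ := e
  induction e with
  | _ a b =>
    have hab : a ≠ b := by
      intro h; subst h; exact G₀.loopless.irrefl a (G₀.mem_edgeSet.mp he)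
    have h1 : ∀ v : V₀, (if v ∈ s(a,b) then (1:ℝ) else 0) =
        (if v = a then 1 else 0) + (if v = b then 1 else 0) := by
      intro v
      simp only [Sym2.mem_iff]
      rcases eq_or_ne v a with rfl | hva <;> rcases eq_or_ne v b with rfl | hvb <;>
        simp_all
    simp_rw [h1]
    rw [Finset.sum_add_distrib]
    simp
    norm_num

lemma pair_count (u v : V₀) (huv : u ≠ v) :
    ∑ e : G₀.edgeSet, ((if u ∈ (e : Sym2 V₀) then (1:ℝ) else 0) *
      (if v ∈ (e : Sym2 V₀) then 1 else 0)) = if G₀.Adj u v then 1 else 0 := by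
  by_cases h : G₀.Adj u v
  · rw [if_pos h]
    rw [Finset.sum_eq_single (⟨s(u,v), G₀.mem_edgeSet.mpr h⟩ : G₀.edgeSet)]
    · simp [Sym2.mem_iff]
    · intro e _ hne
      by_cases h1 : u ∈ (e : Sym2 V₀)
      · by_cases h2 : v ∈ (e : Sym2 V₀)
        · exfalso
          apply hne
          ext1
          exact (Sym2.mem_and_mem_iff huv).mp ⟨h1, h2⟩
        · simp [h2]
      · simp [h1]
    · simp
  · rw [if_neg h]
    apply Finset.sum_eq_zero
    intro e _
    by_cases h1 : u ∈ (e : Sym2 V₀)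
    · by_cases h2 : v ∈ (e : Sym2 V₀)
      · exfalso
        have h3 := (Sym2.mem_and_mem_iff huv).mp ⟨h1, h2⟩
        apply h
        rw [← G₀.mem_edgeSet]
        have he := e.2
        rwa [h3] at he
      · simp [h2]
    · simp [h1]

lemma core_sum (u : V₀) (f : V₀ → ℝ) :
    ∑ e : G₀.edgeSet, (if u ∈ (e : Sym2 V₀) then
        (∑ v : V₀, if v ∈ (e : Sym2 V₀) then f v else 0) - f u else 0) =
      ∑ v : V₀, (if G₀.Adj u v then f v else 0) := by
  have step1 : ∀ e : G₀.edgeSet, (if u ∈ (e : Sym2 V₀) then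
      (∑ v : V₀, if v ∈ (e : Sym2 V₀) then f v else 0) - f u else 0)
      = (∑ v : V₀, ((if u ∈ (e : Sym2 V₀) then (1:ℝ) else 0) *
          (if v ∈ (e : Sym2 V₀) then 1 else 0)) * f v)
        - (if u ∈ (e : Sym2 V₀) then (1:ℝ) else 0) * f u := by
    intro e
    by_cases h : u ∈ (e : Sym2 V₀)
    · simp only [if_pos h, one_mul]
      congr 1
      refine Finset.sum_congr rfl fun v _ => ?_
      by_cases hv : v ∈ (e : Sym2 V₀) <;> simp [hv]
    · simp [if_neg h]
  simp_rw [step1]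
  rw [Finset.sum_sub_distrib, Finset.sum_comm]
  have step2 : ∀ v : V₀, (∑ e : G₀.edgeSet, ((if u ∈ (e : Sym2 V₀) then (1:ℝ) else 0) *
      (if v ∈ (e : Sym2 V₀) then 1 else 0)) * f v)
      = (if G₀.Adj u v then f v else 0)
        + (if v = u then (∑ e : G₀.edgeSet, (if u ∈ (e : Sym2 V₀) then (1:ℝ) else 0)) * f u
          else 0) := by
    intro v
    rcases eq_or_ne v u with rfl | hne
    · rw [if_pos rfl, if_neg (G₀.irrefl), zero_add, ← Finset.sum_mul]
      congr 1
      refine Finset.sum_congr rfl fun e _ => ?_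
      by_cases h : v ∈ (e : Sym2 V₀) <;> simp [h]
    · rw [if_neg hne, add_zero, ← Finset.sum_mul, pair_count G₀ u v (Ne.symm hne)]
      by_cases h : G₀.Adj u v <;> simp [h]
  simp_rw [step2]
  rw [Finset.sum_add_distrib, Finset.sum_ite_eq' Finset.univ u
    (fun _ => (∑ e : G₀.edgeSet, (if u ∈ (e : Sym2 V₀) then (1:ℝ) else 0)) * f u)]
  rw [if_pos (Finset.mem_univ u), ← Finset.sum_mul]
  ring

@[simp] lemma subdivision_adj_inl_inl (u v : V₀) :
    (subdivision G₀).Adj (Sum.inl u) (Sum.inl v) ↔ False := Iff.rfl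
@[simp] lemma subdivision_adj_inl_inr (u : V₀) (e : G₀.edgeSet) :
    (subdivision G₀).Adj (Sum.inl u) (Sum.inr e) ↔ u ∈ (e : Sym2 V₀) := Iff.rfl
@[simp] lemma subdivision_adj_inr_inl (u : V₀) (e : G₀.edgeSet) :
    (subdivision G₀).Adj (Sum.inr e) (Sum.inl u) ↔ u ∈ (e : Sym2 V₀) := Iff.rfl
@[simp] lemma subdivision_adj_inr_inr (e f : G₀.edgeSet) :
    (subdivision G₀).Adj (Sum.inr e) (Sum.inr f) ↔ False := Iff.rfl
@[simp] lemma triangulation_adj_inl_inl (u v : V₀) :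
    (triangulation G₀).Adj (Sum.inl u) (Sum.inl v) ↔ G₀.Adj u v := Iff.rfl
@[simp] lemma triangulation_adj_inl_inr (u : V₀) (e : G₀.edgeSet) :
    (triangulation G₀).Adj (Sum.inl u) (Sum.inr e) ↔ u ∈ (e : Sym2 V₀) := Iff.rfl
@[simp] lemma triangulation_adj_inr_inl (u : V₀) (e : G₀.edgeSet) :
    (triangulation G₀).Adj (Sum.inr e) (Sum.inl u) ↔ u ∈ (e : Sym2 V₀) := Iff.rfl
@[simp] lemma triangulation_adj_inr_inr (e f : G₀.edgeSet) :
    (triangulation G₀).Adj (Sum.inr e) (Sum.inr f) ↔ False := Iff.rfl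

lemma subdivision_connected (hconn : G₀.Connected) : (subdivision G₀).Connected := by
  haveI : Nonempty V₀ := hconn.nonempty
  haveI : Nonempty (V₀ ⊕ G₀.edgeSet) := ⟨Sum.inl (Classical.arbitrary V₀)⟩
  constructor
  · intro x y
    have h1 : ∀ u v : V₀, G₀.Adj u v → (subdivision G₀).Reachable (Sum.inl u) (Sum.inl v) := by
      intro u v h
      have a1 : (subdivision G₀).Adj (Sum.inl u) (Sum.inr ⟨s(u,v), G₀.mem_edgeSet.mpr h⟩) :=
        Sym2.mem_mk_left u v
      have a2 : (subdivision G₀).Adj (Sum.inr ⟨s(u,v), G₀.mem_edgeSet.mpr h⟩) (Sum.inl v) :=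
        Sym2.mem_mk_right u v
      exact a1.reachable.trans a2.reachable
    have h2 : ∀ u v : V₀, G₀.Reachable u v →
        (subdivision G₀).Reachable (Sum.inl u) (Sum.inl v) := by
      intro u v ⟨p⟩
      induction p with
      | nil => exact SimpleGraph.Reachable.refl _
      | cons h _ ih => exact (h1 _ _ h).trans ih
    have h0 : ∀ x : V₀ ⊕ G₀.edgeSet, ∃ u : V₀, (subdivision G₀).Reachable x (Sum.inl u) := by
      rintro (u | ⟨e, he⟩)
      · exact ⟨u, SimpleGraph.Reachable.refl _⟩
      · induction e with
        | _ a b =>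
          refine ⟨a, SimpleGraph.Adj.reachable ?_⟩
          exact Sym2.mem_mk_left a b
    obtain ⟨u, hu⟩ := h0 x
    obtain ⟨v, hv⟩ := h0 y
    exact (hu.trans (h2 u v (hconn.preconnected u v))).trans hv.symm

lemma subdivision_le_triangulation : subdivision G₀ ≤ triangulation G₀ := by
  rintro (u | e) (v | f) h
  · exact ((subdivision_adj_inl_inl G₀ u v).mp h).elim
  · exact h
  · exact h
  · exact ((subdivision_adj_inr_inr G₀ e f).mp h).elim

lemma triangulation_connected (hconn : G₀.Connected) : (triangulation G₀).Connected :=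
  (subdivision_connected G₀ hconn).mono (subdivision_le_triangulation G₀)

lemma key_mulVec (w r : (V₀ ⊕ G₀.edgeSet) → ℝ)
    (hw : (subdivision G₀).lapMatrix ℝ *ᵥ w = r) :
    (triangulation G₀).lapMatrix ℝ *ᵥ
      (fun p => (w p + Sum.elim (fun _ => (0:ℝ)) (fun e => r (Sum.inr e)) p) / 3) = r := by
  have hSu : ∀ u : V₀,
      ∑ e : G₀.edgeSet, (if u ∈ (e : Sym2 V₀) then w (Sum.inl u) - w (Sum.inr e) else 0)
        = r (Sum.inl u) := by
    intro u
    have h := congrFun hw (Sum.inl u)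
    rw [lap_mulVec, Fintype.sum_sum_type] at h
    simpa using h
  have hSe : ∀ e : G₀.edgeSet,
      ∑ v : V₀, (if v ∈ (e : Sym2 V₀) then w (Sum.inr e) - w (Sum.inl v) else 0)
        = r (Sum.inr e) := by
    intro e
    have h := congrFun hw (Sum.inr e)
    rw [lap_mulVec, Fintype.sum_sum_type] at h
    simpa using h
  have hWe : ∀ e : G₀.edgeSet,
      ∑ v : V₀, (if v ∈ (e : Sym2 V₀) then w (Sum.inl v) else 0)
        = 2 * w (Sum.inr e) - r (Sum.inr e) := by
    intro e
    have h := hSe e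
    have h2 : ∑ v : V₀, (if v ∈ (e : Sym2 V₀) then w (Sum.inr e) - w (Sum.inl v) else 0)
        = (∑ v : V₀, if v ∈ (e : Sym2 V₀) then (1:ℝ) else 0) * w (Sum.inr e)
          - ∑ v : V₀, (if v ∈ (e : Sym2 V₀) then w (Sum.inl v) else 0) := by
      rw [Finset.sum_mul, ← Finset.sum_sub_distrib]
      refine Finset.sum_congr rfl fun v _ => ?_
      by_cases hv : v ∈ (e : Sym2 V₀) <;> simp [hv]
    rw [h2, count_two] at h
    linarith
  funext i
  rw [lap_mulVec, Fintype.sum_sum_type]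
  cases i with
  | inl u =>
    simp only [triangulation_adj_inl_inl, triangulation_adj_inl_inr, Sum.elim_inl, Sum.elim_inr,
      add_zero]
    have hC1 : ∑ e : G₀.edgeSet,
        (if u ∈ (e : Sym2 V₀) then (2 * w (Sum.inr e) - r (Sum.inr e)) - w (Sum.inl u) else 0)
        = ∑ v : V₀, (if G₀.Adj u v then w (Sum.inl v) else 0) := by
      rw [← core_sum G₀ u (fun v => w (Sum.inl v))]
      refine Finset.sum_congr rfl fun e _ => ?_
      by_cases h : u ∈ (e : Sym2 V₀)
      · rw [if_pos h, if_pos h, hWe e]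
      · rw [if_neg h, if_neg h]
    have hC2 : ∑ e : G₀.edgeSet, (if u ∈ (e : Sym2 V₀) then (1:ℝ) else 0)
        = ∑ v : V₀, (if G₀.Adj u v then (1:ℝ) else 0) := by
      rw [← core_sum G₀ u (fun _ => (1:ℝ))]
      refine Finset.sum_congr rfl fun e _ => ?_
      by_cases h : u ∈ (e : Sym2 V₀)
      · rw [if_pos h, if_pos h, count_two]; norm_num
      · rw [if_neg h, if_neg h]
    have hA : ∑ v : V₀, (if G₀.Adj u v then
          w (Sum.inl u) / 3 - w (Sum.inl v) / 3 else 0)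
        = (∑ v : V₀, if G₀.Adj u v then (1:ℝ) else 0) * (w (Sum.inl u) / 3)
          - (1/3) * ∑ v : V₀, (if G₀.Adj u v then w (Sum.inl v) else 0) := by
      rw [Finset.sum_mul, Finset.mul_sum, ← Finset.sum_sub_distrib]
      refine Finset.sum_congr rfl fun v _ => ?_
      by_cases hv : G₀.Adj u v <;> simp [hv] <;> ring
    rw [hA, ← hC2, ← hC1, Finset.sum_mul, Finset.mul_sum, ← Finset.sum_sub_distrib,
      ← Finset.sum_add_distrib]
    rw [← hSu u]
    refine Finset.sum_congr rfl fun e _ => ?_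
    by_cases h : u ∈ (e : Sym2 V₀) <;> simp only [if_pos, if_neg, h, if_true, if_false,
      Sum.elim_inl, Sum.elim_inr, add_zero] <;> ring
  | inr e =>
    simp only [triangulation_adj_inr_inl, triangulation_adj_inr_inr, Sum.elim_inl, Sum.elim_inr,
      add_zero, if_false]
    rw [Finset.sum_const_zero, add_zero]
    have h2 : ∑ v : V₀, (if v ∈ (e : Sym2 V₀) then
          (w (Sum.inr e) + r (Sum.inr e)) / 3 - w (Sum.inl v) / 3 else 0)
        = (∑ v : V₀, if v ∈ (e : Sym2 V₀) then (1:ℝ) else 0) *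
            ((w (Sum.inr e) + r (Sum.inr e)) / 3)
          - (1/3) * ∑ v : V₀, (if v ∈ (e : Sym2 V₀) then w (Sum.inl v) else 0) := by
      rw [Finset.sum_mul, Finset.mul_sum, ← Finset.sum_sub_distrib]
      refine Finset.sum_congr rfl fun v _ => ?_
      by_cases hv : v ∈ (e : Sym2 V₀) <;> simp [hv] <;> ring
    rw [h2, count_two, hWe e]
    ring

lemma key_pair (hconn : G₀.Connected) (x y : V₀ ⊕ G₀.edgeSet) (hxy : x ≠ y) :
    resistanceDistance (triangulation G₀) x y
      = (1/3) * resistanceDistance (subdivision G₀) x y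
        + (1/3) * (Sum.elim (fun _ => (0:ℝ)) (fun _ => 1) x
          + Sum.elim (fun _ => (0:ℝ)) (fun _ => 1) y) := by
  classical
  obtain ⟨BS, hMPS, hsolve⟩ := exists_MP (subdivision G₀) (subdivision_connected G₀ hconn)
  set r : (V₀ ⊕ G₀.edgeSet) → ℝ := Pi.single x 1 - Pi.single y 1 with hr
  have hrsum : ∑ i, r i = 0 := by
    simp [hr, Finset.sum_sub_distrib]
  have hw : (subdivision G₀).lapMatrix ℝ *ᵥ (BS *ᵥ r) = r := hsolve r hrsum
  set w : (V₀ ⊕ G₀.edgeSet) → ℝ := BS *ᵥ r with hwdef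
  have hRS := resist_eq (subdivision G₀) (subdivision_connected G₀ hconn) x y w hw
  have hz := key_mulVec G₀ w r hw
  have hRT := resist_eq (triangulation G₀) (triangulation_connected G₀ hconn) x y _ hz
  rw [hRS, hRT]
  have hrx : r x = 1 := by
    simp [hr, Pi.single_eq_same, Pi.single_eq_of_ne hxy]
  have hry : r y = -1 := by
    simp [hr, Pi.single_eq_same, Pi.single_eq_of_ne (Ne.symm hxy)]
  cases x with
  | inl u =>
    cases y with
    | inl v => simp only [Sum.elim_inl, add_zero]; ring
    | inr f => simp only [Sum.elim_inl, Sum.elim_inr, add_zero]; rw [hry]; ring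
  | inr e =>
    cases y with
    | inl v => simp only [Sum.elim_inl, Sum.elim_inr, add_zero]; rw [hrx]; ring
    | inr f =>
      simp only [Sum.elim_inr]
      rw [hrx, hry]; ring

end AuxGraph

theorem statement_15 {V : Type*} [Fintype V] [DecidableEq V]
    (G : SimpleGraph V) [DecidableRel G.Adj] (n m : ℕ)
    (hn : Fintype.card V = n) (hm : G.edgeFinset.card = m)
    (hconn : G.Connected) (hn2 : 2 ≤ n) :
    kirchhoffIndex (triangulation G) =
      (1 / 3) * kirchhoffIndex (subdivision G) + (m : ℝ) * ((m : ℝ) + n - 1) / 3 := by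
  classical
  haveI : Nonempty V := hconn.nonempty
  have hM : ∑ j : V ⊕ G.edgeSet, Sum.elim (fun _ => (0:ℝ)) (fun _ => 1) j = m := by
    rw [Fintype.sum_sum_type]
    simp only [Sum.elim_inl, Sum.elim_inr, Finset.sum_const_zero, zero_add, Finset.sum_const,
      nsmul_eq_mul, mul_one, Finset.card_univ]
    rw [← G.edgeFinset_card, hm]
  have hN : (Fintype.card (V ⊕ G.edgeSet) : ℝ) = n + m := by
    rw [Fintype.card_sum, hn, ← G.edgeFinset_card, hm]
    push_cast
    ring
  have hpair : ∀ i j : V ⊕ G.edgeSet,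
      resistanceDistance (triangulation G) i j
        = (1/3) * resistanceDistance (subdivision G) i j
          + (1/3) * (if i = j then 0 else Sum.elim (fun _ => (0:ℝ)) (fun _ => 1) i
            + Sum.elim (fun _ => (0:ℝ)) (fun _ => 1) j) := by
    intro i j
    rcases eq_or_ne i j with rfl | hne
    · rw [if_pos rfl, resist_self, resist_self]
      ring
    · rw [if_neg hne]
      exact key_pair G hconn i j hne
  unfold kirchhoffIndex
  simp_rw [hpair]
  have hinner : ∀ i : V ⊕ G.edgeSet,
      ∑ j : V ⊕ G.edgeSet, (if i = j then (0:ℝ) else Sum.elim (fun _ => (0:ℝ)) (fun _ => 1) i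
          + Sum.elim (fun _ => (0:ℝ)) (fun _ => 1) j)
        = (Fintype.card (V ⊕ G.edgeSet) : ℝ) * Sum.elim (fun _ => (0:ℝ)) (fun _ => 1) i
          + m - 2 * Sum.elim (fun _ => (0:ℝ)) (fun _ => 1) i := by
    intro i
    have h1 : ∀ j : V ⊕ G.edgeSet,
        (if i = j then (0:ℝ) else Sum.elim (fun _ => (0:ℝ)) (fun _ => 1) i
          + Sum.elim (fun _ => (0:ℝ)) (fun _ => 1) j)
        = (Sum.elim (fun _ => (0:ℝ)) (fun _ => 1) i + Sum.elim (fun _ => (0:ℝ)) (fun _ => 1) j)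
          - (if i = j then Sum.elim (fun _ => (0:ℝ)) (fun _ => 1) i
              + Sum.elim (fun _ => (0:ℝ)) (fun _ => 1) j else 0) := by
      intro j; split <;> ring
    simp_rw [h1]
    rw [Finset.sum_sub_distrib, Finset.sum_add_distrib, Finset.sum_const, hM,
      Finset.sum_ite_eq Finset.univ i, if_pos (Finset.mem_univ i)]
    simp only [Finset.card_univ, nsmul_eq_mul]
    ring
  simp only [Finset.sum_add_distrib, ← Finset.mul_sum]
  simp_rw [hinner]
  rw [Finset.sum_sub_distrib, Finset.sum_add_distrib, ← Finset.mul_sum, ← Finset.mul_sum, hM,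
    Finset.sum_const, Finset.card_univ, nsmul_eq_mul, hN]
  ring


end KirchhoffPaper
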